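/- Let h be an N×N real symmetric centrosymmetric matrix, t a real number, and c a complex number. If exp(−i t h)·e_1 = c·e_N, then exp(−2 i t h)·e_1 = c²·e_1. (In particular, every perfect state transfer system exhibits a perfect revival at twice the transfer time.) -/

import Mathlib

set_option maxHeartbeats 1000000 in


/-- Perfect state transfer at time `t` in a real symmetric centrosymmetric matrix implies
a perfect revival (with phase `c²`) at time `2t`. -/
theorem revival_of_perfect_state_transfer
    (N : ℕ) (hN : 0 < N) (h : Matrix (Fin N) (Fin N) ℝ)
    (hsym : h.IsSymm)
    (hcs : ∀ i j : Fin N, h i j = h i.rev j.rev)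
    (t : ℝ) (c : ℂ)
    (hpst : (NormedSpace.exp
        ((-(Complex.I * (t : ℂ))) • h.map Complex.ofReal)).mulVec
        (Pi.single (⟨0, hN⟩ : Fin N) (1 : ℂ))
      = c • (Pi.single (⟨N - 1, by omega⟩ : Fin N) (1 : ℂ) : Fin N → ℂ)) :
    (NormedSpace.exp
        ((-(Complex.I * ((2 * t : ℝ) : ℂ))) • h.map Complex.ofReal)).mulVec
        (Pi.single (⟨0, hN⟩ : Fin N) (1 : ℂ))
      = (c ^ 2) • (Pi.single (⟨0, hN⟩ : Fin N) (1 : ℂ) : Fin N → ℂ) := by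
  set A : Matrix (Fin N) (Fin N) ℂ := (-(Complex.I * (t : ℂ))) • h.map Complex.ofReal with hA
  set U : Matrix (Fin N) (Fin N) ℂ := NormedSpace.exp A with hU
  -- the reversal permutation matrix
  set J : Matrix (Fin N) (Fin N) ℂ := Matrix.of fun i j => if j = i.rev then 1 else 0 with hJ
  have hJA : J * A = A * J := by
    ext i j
    simp only [Matrix.mul_apply, hJ, Matrix.of_apply, ite_mul, one_mul, zero_mul,
      mul_ite, mul_one, mul_zero]
    have hcond : ∀ x : Fin N, (j = x.rev) ↔ (x = j.rev) := fun x => by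
      rw [eq_comm, Fin.rev_eq_iff]
    simp only [hcond]
    rw [Finset.sum_ite_eq', Finset.sum_ite_eq']
    simp only [Finset.mem_univ, if_true]
    have := hcs i.rev j
    simp only [Fin.rev_rev] at this
    simp [hA, Matrix.smul_apply, Matrix.map_apply, this]
  have hJU : J * U = U * J := (Commute.exp_right hJA : Commute J U)
  have hUcs : ∀ i j, U i.rev j = U i j.rev := by
    intro i j
    have h1 : (J * U) i j = U i.rev j := by
      simp [hJ, Matrix.mul_apply]
    have h2 : (U * J) i j = U i j.rev := by
      simp only [Matrix.mul_apply, hJ, Matrix.of_apply, mul_ite, mul_one, mul_zero]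
      have hcond : ∀ x : Fin N, (j = x.rev) ↔ (x = j.rev) := fun x => by
        rw [eq_comm, Fin.rev_eq_iff]
      simp only [hcond]
      rw [Finset.sum_ite_eq']
      simp
    rw [← h1, hJU, h2]
  have hsplit : (-(Complex.I * ((2 * t : ℝ) : ℂ))) • h.map Complex.ofReal = A + A := by
    rw [hA, ← add_smul]
    congr 1
    push_cast
    ring
  have hUU : NormedSpace.exp
      ((-(Complex.I * ((2 * t : ℝ) : ℂ))) • h.map Complex.ofReal) = U * U := by
    rw [hsplit, hU]
    exact Matrix.exp_add_of_commute A A (Commute.refl A)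
  clear hJU hJA hJ hsplit hA hU
  clear_value A U J
  clear A J
  have e0 : (⟨0, hN⟩ : Fin N) = (⟨N - 1, by omega⟩ : Fin N).rev := by
    ext; simp [Fin.rev]; omega
  have eL : (⟨N - 1, by omega⟩ : Fin N) = (⟨0, hN⟩ : Fin N).rev := by
    ext; simp [Fin.rev]
  -- column formulation of hpst
  have hcol0 : ∀ i, U i ⟨0, hN⟩ = c * (Pi.single (⟨N - 1, by omega⟩ : Fin N) (1 : ℂ) : Fin N → ℂ) i := by
    intro i
    have := congrFun hpst i
    simpa [Matrix.mulVec_single] using this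
  have hcolL : ∀ i, U i ⟨N - 1, by omega⟩ = c * (Pi.single (⟨0, hN⟩ : Fin N) (1 : ℂ) : Fin N → ℂ) i := by
    intro i
    have h1 : U i ⟨N - 1, by omega⟩ = U i.rev ⟨0, hN⟩ := by
      rw [eL]
      exact (hUcs i ⟨0, hN⟩).symm
    rw [h1, hcol0 i.rev]
    have : ((Pi.single (⟨N - 1, by omega⟩ : Fin N) (1 : ℂ) : Fin N → ℂ) i.rev) = ((Pi.single (⟨0, hN⟩ : Fin N) (1 : ℂ) : Fin N → ℂ) i) := by
      rcases eq_or_ne i (⟨0, hN⟩ : Fin N) with rfl | hne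
      · rw [← eL]; simp
      · rw [Pi.single_eq_of_ne hne, Pi.single_eq_of_ne]
        intro hcon
        apply hne
        rw [e0, ← hcon, Fin.rev_rev]
    rw [this]
  rw [hUU, ← Matrix.mulVec_mulVec, hpst, Matrix.mulVec_smul, Matrix.mulVec_single]
  ext i
  simp only [Pi.smul_apply, smul_eq_mul, MulOpposite.op_one, one_smul, Matrix.col_apply]
  rw [hcolL i]
  ring
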